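/- Let M̃_HB be as above with M_ff = A_ff and let E = I - M̃_HB⁻¹A. Then EᵀA S = 0 for S = [I; 0], i.e., range(I - M̃_HB⁻¹A) is A-orthogonal to range(S). -/

import Mathlib

open Matrix

/-- With `M̃_HB` as above (`M_ff = A_ff`) and `E = I - M̃_HB⁻¹A`, one has
`Eᵀ A S = 0` for `S = [I; 0]`: `range(I - M̃_HB⁻¹A)` is `A`-orthogonal to
`range(S)`. -/
theorem HB_error_A_orthogonal_to_S {nf nc : ℕ}
    (Aff : Matrix (Fin nf) (Fin nf) ℝ) (Afc : Matrix (Fin nf) (Fin nc) ℝ)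
    (Acf : Matrix (Fin nc) (Fin nf) ℝ) (Acc : Matrix (Fin nc) (Fin nc) ℝ)
    (A : Matrix (Fin nf ⊕ Fin nc) (Fin nf ⊕ Fin nc) ℝ)
    (hA : A = Matrix.fromBlocks Aff Afc Acf Acc) (hApd : A.PosDef)
    (hAff : IsUnit Aff.det) (τ : ℝ) (hτ : 0 < τ)
    (SA : Matrix (Fin nc) (Fin nc) ℝ) (hSA : SA = Acc - Acf * Aff⁻¹ * Afc)
    (MHB : Matrix (Fin nf ⊕ Fin nc) (Fin nf ⊕ Fin nc) ℝ)
    (hMHB : MHB = Matrix.fromBlocks Aff Afc Acf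
      ((τ ^ 2) • ((2 * τ) • (1 : Matrix (Fin nc) (Fin nc) ℝ) - SA)⁻¹ +
        Acf * Aff⁻¹ * Afc))
    (hMpd : MHB.PosDef)
    (S : Matrix (Fin nf ⊕ Fin nc) (Fin nf) ℝ)
    (hS : S = Matrix.of (Sum.elim (1 : Matrix (Fin nf) (Fin nf) ℝ)
      (0 : Matrix (Fin nc) (Fin nf) ℝ))) :
    (1 - MHB⁻¹ * A)ᵀ * A * S = 0 := by
  have hMu : IsUnit MHB.det := isUnit_iff_ne_zero.mpr hMpd.det_pos.ne'
  have hAsym : Aᵀ = A := by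
    have := hApd.isHermitian
    simpa [Matrix.IsHermitian, Matrix.conjTranspose_eq_transpose_of_trivial] using this
  have hMsym : MHBᵀ = MHB := by
    have := hMpd.isHermitian
    simpa [Matrix.IsHermitian, Matrix.conjTranspose_eq_transpose_of_trivial] using this
  have hT : (1 - MHB⁻¹ * A)ᵀ = 1 - A * MHB⁻¹ := by
    rw [Matrix.transpose_sub, Matrix.transpose_one, Matrix.transpose_mul,
      Matrix.transpose_nonsing_inv, hAsym, hMsym]
  have h2 : A - A * MHB⁻¹ * A = A * MHB⁻¹ * (MHB - A) := by
    rw [Matrix.mul_sub, Matrix.mul_assoc A MHB⁻¹ MHB, Matrix.nonsing_inv_mul MHB hMu, Matrix.mul_one]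
  have key : (MHB - A) * S = 0 := by
    have hdiff : MHB - A = Matrix.fromBlocks 0 0 0
        (((τ ^ 2) • ((2 * τ) • (1 : Matrix (Fin nc) (Fin nc) ℝ) - SA)⁻¹ +
          Acf * Aff⁻¹ * Afc) - Acc) := by
      rw [hMHB, hA]
      ext i j
      rcases i with i | i <;> rcases j with j | j <;>
        simp [Matrix.fromBlocks]
    rw [hdiff, hS]
    ext i j
    cases i with
    | inl i => simp [Matrix.mul_apply, Matrix.fromBlocks, Fintype.sum_sum_type]
    | inr i =>
      simp [Matrix.mul_apply, Matrix.fromBlocks, Fintype.sum_sum_type]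
      exact Finset.sum_eq_zero fun a _ => mul_eq_zero_of_right _ rfl
  rw [hT, Matrix.sub_mul, Matrix.one_mul, h2, Matrix.mul_assoc, key, Matrix.mul_zero]
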